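/- Let H be a real Hilbert space, C ⊆ H a nonempty closed r-prox-regular set (r > 0), and V : H → ℝ a differentiable function whose gradient ∇V is Lipschitz continuous. Let x(·) be the unique locally absolutely continuous solution of ẋ(t) ∈ −∇V(x(t)) − N(C, x(t)) a.e. on [0,∞) with x(0) = x₀ ∈ C. Then for almost every t ≥ 0: (d/dt) V(x(t)) + ‖ẋ(t)‖² = 0. In particular t ↦ V(x(t)) is nonincreasing, i.e. V is a Lyapunov function of the system. -/

import Mathlib

open Set Filter Metric MeasureTheory Topology
open scoped RealInnerProductSpace NNReal ENNReal

variable {H : Type*} [NormedAddCommGroup H] [InnerProductSpace ℝ H] [CompleteSpace H]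

/-- The proximal normal cone of a set `C` at a point `x`:
`ξ ∈ N(C,x)` iff there exist `σ > 0`, `δ > 0` with
`⟪ξ, y - x⟫ ≤ δ ‖y - x‖²` for all `y ∈ C` with `‖y - x‖ ≤ σ`. -/
def proxNormalCone (C : Set H) (x : H) : Set H :=
  {ξ | ∃ σ > (0 : ℝ), ∃ δ > (0 : ℝ), ∀ y ∈ C, ‖y - x‖ ≤ σ → ⟪ξ, y - x⟫ ≤ δ * ‖y - x‖ ^ 2}

/-- `C` is `r`-prox-regular: every point `s` with `d(s,C) < r` has a unique
nearest point `p s` in `C`, and the nearest-point map `p` is continuous on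
the enlargement `U_r(C) = {s | d(s,C) < r}`. -/
def IsProxRegular (C : Set H) (r : ℝ) : Prop :=
  ∃ p : H → H,
    (∀ s : H, infDist s C < r →
      (p s ∈ C ∧ dist s (p s) = infDist s C) ∧
      ∀ y ∈ C, dist s y = infDist s C → y = p s) ∧
    ContinuousOn p {s : H | infDist s C < r}

/-- The set `f(x) - N(C,x)`. -/
def flowSet (C : Set H) (f : H → H) (x : H) : Set H :=
  {v | f x - v ∈ proxNormalCone C x}

/-- `x : ℝ → H` is the (locally absolutely continuous) solution of the differential
inclusion `ẋ(t) ∈ f(x(t)) - N(C, x(t))` a.e. on `[0, ∞)`, `x(0) = x₀`, with a.e.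
derivative `x'`: it starts at `x₀`, stays in `C`, is a locally Bochner integral of
`x'` (local absolute continuity), has derivative `x' t` at a.e. `t ≥ 0`, and
satisfies the inclusion at a.e. `t ≥ 0`. -/
structure IsSolutionOf (C : Set H) (f : H → H) (x₀ : H) (x x' : ℝ → H) : Prop where
  init : x 0 = x₀
  memC : ∀ t ≥ (0 : ℝ), x t ∈ C
  locInt : ∀ T > (0 : ℝ), IntegrableOn x' (Icc 0 T)
  integ : ∀ t ≥ (0 : ℝ), x t = x₀ + ∫ s in (0 : ℝ)..t, x' s
  deriv : ∀ᵐ t ∂(volume.restrict (Ici (0 : ℝ))), HasDerivAt x (x' t) t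
  incl : ∀ᵐ t ∂(volume.restrict (Ici (0 : ℝ))), x' t ∈ flowSet C f (x t)

/-- Descent lemma for a function with Lipschitz gradient. -/
lemma descent_lemma {V : H → ℝ} {V' : H → H}
    (hV : ∀ y, HasGradientAt V (V' y) y) {k : ℝ≥0} (hV' : LipschitzWith k V')
    (a b : H) : V b - V a ≤ ⟪V' a, b - a⟫ + (k : ℝ) / 2 * ‖b - a‖ ^ 2 := by
  set c : ℝ → H := fun θ => a + θ • (b - a) with hc
  have hpath : ∀ θ : ℝ, HasDerivAt c (b - a) θ := fun θ => by
    simpa [hc] using ((hasDerivAt_id θ).smul_const (b - a)).const_add a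
  have hφ : ∀ θ : ℝ, HasDerivAt (fun θ => V (c θ)) ⟪V' (c θ), b - a⟫ θ := fun θ => by
    simpa [InnerProductSpace.toDual_apply_apply, Function.comp_def] using
      ((hV (c θ)).hasFDerivAt.comp_hasDerivAt θ (hpath θ))
  have hcont : Continuous fun θ : ℝ => ⟪V' (c θ), b - a⟫ := by
    have hcc : Continuous c := by
      rw [hc]; exact continuous_const.add ((continuous_id).smul continuous_const)
    exact ((hV'.continuous.comp hcc).inner continuous_const)
  have key : ∫ θ in (0:ℝ)..1, ⟪V' (c θ), b - a⟫ = V (c 1) - V (c 0) :=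
    intervalIntegral.integral_eq_sub_of_hasDerivAt (fun θ _ => hφ θ)
      (hcont.intervalIntegrable 0 1)
  have hbound : ∀ θ ∈ Icc (0:ℝ) 1,
      ⟪V' (c θ), b - a⟫ ≤ ⟪V' a, b - a⟫ + (k : ℝ) * θ * ‖b - a‖ ^ 2 := by
    intro θ hθ
    have h1 : ⟪V' (c θ) - V' a, b - a⟫ ≤ ‖V' (c θ) - V' a‖ * ‖b - a‖ :=
      real_inner_le_norm _ _
    have h2 : ‖V' (c θ) - V' a‖ ≤ (k : ℝ) * (θ * ‖b - a‖) := by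
      have h3 := hV'.dist_le_mul (c θ) a
      have h4 : dist (c θ) a = θ * ‖b - a‖ := by
        simp [hc, dist_eq_norm, norm_smul, abs_of_nonneg hθ.1]
      rw [h4] at h3
      simpa [dist_eq_norm] using h3
    have h5 : ⟪V' (c θ), b - a⟫ = ⟪V' a, b - a⟫ + ⟪V' (c θ) - V' a, b - a⟫ := by
      rw [inner_sub_left]; ring
    nlinarith [norm_nonneg (b - a), norm_nonneg (V' (c θ) - V' a)]
  have hmono : ∫ θ in (0:ℝ)..1, ⟪V' (c θ), b - a⟫ ≤
      ∫ θ in (0:ℝ)..1, (⟪V' a, b - a⟫ + (k : ℝ) * θ * ‖b - a‖ ^ 2) := by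
    refine intervalIntegral.integral_mono_on zero_le_one
      (hcont.intervalIntegrable 0 1) ?_ hbound
    exact (continuous_const.add ((continuous_const.mul continuous_id).mul
      continuous_const)).intervalIntegrable 0 1
  have hval : ∫ θ in (0:ℝ)..1, (⟪V' a, b - a⟫ + (k : ℝ) * θ * ‖b - a‖ ^ 2) =
      ⟪V' a, b - a⟫ + (k : ℝ) / 2 * ‖b - a‖ ^ 2 := by
    have : (fun θ : ℝ => ⟪V' a, b - a⟫ + (k : ℝ) * θ * ‖b - a‖ ^ 2) =
        fun θ : ℝ => ⟪V' a, b - a⟫ + θ * ((k : ℝ) * ‖b - a‖ ^ 2) := by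
      funext θ; ring
    have hii : IntervalIntegrable (fun θ : ℝ => θ * ((k : ℝ) * ‖b - a‖ ^ 2)) volume 0 1 := by
      apply Continuous.intervalIntegrable; fun_prop
    rw [this, intervalIntegral.integral_add (intervalIntegrable_const) hii,
      intervalIntegral.integral_mul_const, integral_id]
    simp; ring
  have hc1 : c 1 = b := by simp [hc]
  have hc0 : c 0 = a := by simp [hc]
  rw [hc1, hc0] at key
  linarith [key ▸ hmono, hval ▸ hmono]


set_option maxHeartbeats 2000000 in
/-- Proposition 3.6, energy identity: for `V : H → ℝ` differentiable with Lipschitz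
gradient `∇V`, along the solution of `ẋ ∈ -∇V(x) - N(C,x)`, `x(0) = x₀ ∈ C`, one
has `(d/dt) V(x(t)) + ‖ẋ(t)‖² = 0` for a.e. `t ≥ 0`; in particular `t ↦ V(x(t))`
is nonincreasing on `[0,∞)`, i.e. `V` is a Lyapunov function of the system. -/
theorem energy_identity (C : Set H) (hC : IsClosed C) (hCne : C.Nonempty)
    (r : ℝ) (hr : 0 < r) (hreg : IsProxRegular C r)
    (V : H → ℝ) (V' : H → H) (hV : ∀ y, HasGradientAt V (V' y) y)
    (k : ℝ≥0) (hV' : LipschitzWith k V')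
    (x₀ : H) (hx₀ : x₀ ∈ C)
    (x x' : ℝ → H) (hsol : IsSolutionOf C (fun y => -V' y) x₀ x x') :
    (∀ᵐ t ∂(volume.restrict (Ici (0 : ℝ))),
      HasDerivAt (fun s => V (x s)) (-‖x' t‖ ^ 2) t) ∧
    AntitoneOn (fun t => V (x t)) (Ici 0) := by
  -- the key pointwise a.e. fact
  have hpos : ∀ᵐ t ∂(volume.restrict (Ici (0 : ℝ))), (0 : ℝ) < t := by
    have h1 : ∀ᵐ t ∂(volume.restrict (Ici (0 : ℝ))), t ∈ Ici (0 : ℝ) :=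
      ae_restrict_mem measurableSet_Ici
    have h2 : ∀ᵐ t ∂(volume.restrict (Ici (0 : ℝ))), t ≠ 0 := by
      rw [ae_iff]
      have : {t : ℝ | ¬ t ≠ 0} = {(0 : ℝ)} := by ext t; simp
      rw [this, Measure.restrict_apply (measurableSet_singleton 0)]
      exact measure_mono_null inter_subset_left (measure_singleton 0)
    filter_upwards [h1, h2] with t ht ht0
    exact lt_of_le_of_ne ht (Ne.symm ht0)
  have key : ∀ᵐ t ∂(volume.restrict (Ici (0 : ℝ))),
      HasDerivAt x (x' t) t ∧ ⟪V' (x t), x' t⟫ = -‖x' t‖ ^ 2 := by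
    filter_upwards [hsol.deriv, hsol.incl, hpos] with t hd hi ht
    refine ⟨hd, ?_⟩
    obtain ⟨σ, hσ, δ, hδ, hcone⟩ := hi
    set ξ : H := -V' (x t) - x' t with hξ
    have hcx : Filter.Tendsto x (𝓝 t) (𝓝 (x t)) := hd.continuousAt
    have hφmax : IsLocalMax (fun s => ⟪ξ, x s - x t⟫ - δ * ‖x s - x t‖ ^ 2) t := by
      have h1 : ∀ᶠ s in 𝓝 t, x s ∈ closedBall (x t) σ :=
        hcx (closedBall_mem_nhds (x t) hσ)
      have h2 : ∀ᶠ s in 𝓝 t, (0 : ℝ) < s := eventually_gt_nhds ht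
      filter_upwards [h1, h2] with s hs1 hs2
      have hnorm : ‖x s - x t‖ ≤ σ := by
        rw [← dist_eq_norm]; exact mem_closedBall.1 hs1
      have := hcone (x s) (hsol.memC s hs2.le) hnorm
      simp only [sub_self, inner_zero_right, norm_zero]
      nlinarith
    have hd1 : HasDerivAt (fun s => ⟪ξ, x s - x t⟫ - δ * ‖x s - x t‖ ^ 2)
        (⟪ξ, x' t⟫) t := by
      have e1 : HasDerivAt (fun s => x s - x t) (x' t) t := hd.sub_const _
      have e2 : HasDerivAt (fun s => ⟪ξ, x s - x t⟫) (⟪ξ, x' t⟫) t := by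
        simpa using (hasDerivAt_const t ξ).inner ℝ e1
      have e3 : HasDerivAt (fun s => ‖x s - x t‖ ^ 2) 0 t := by
        have := e1.inner ℝ e1
        simp only [sub_self, inner_zero_right, inner_zero_left, add_zero] at this
        simpa [real_inner_self_eq_norm_sq] using this
      exact (e2.sub (e3.const_mul δ)).congr_deriv (by simp)
    have hzero : ⟪ξ, x' t⟫ = 0 := hφmax.hasDerivAt_eq_zero hd1
    rw [hξ, inner_sub_left, inner_neg_left] at hzero
    have hsq := real_inner_self_eq_norm_sq (x' t)
    linarith
  constructor
  · filter_upwards [key] with t ht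
    have := (hV (x t)).hasFDerivAt.comp_hasDerivAt t ht.1
    simpa [InnerProductSpace.toDual_apply_apply, ht.2, Function.comp_def] using this
  -- antitonicity
  intro a ha b hb hab
  simp only
  rcases eq_or_lt_of_le hab with rfl | hlt
  · exact le_rfl
  have hb0 : 0 < b := lt_of_le_of_lt ha hlt
  set g : ℝ → ℝ := fun u => ⟪V' (x u), x' u⟫ with hgdef
  have hx'int : IntegrableOn x' (Icc 0 b) := hsol.locInt b hb0
  have hxcont : ContinuousOn x (Icc 0 b) := by
    have h1 : ContinuousOn (fun u => x₀ + ∫ s in (0:ℝ)..u, x' s) (Icc 0 b) := by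
      apply continuousOn_const.add
      have h2 : IntegrableOn x' (uIcc 0 b) := by rwa [uIcc_of_le hb0.le]
      simpa [uIcc_of_le hb0.le] using
        intervalIntegral.continuousOn_primitive_interval h2
    exact h1.congr fun u hu => hsol.integ u hu.1
  have hVx : ContinuousOn (fun u => V' (x u)) (Icc 0 b) :=
    hV'.continuous.comp_continuousOn hxcont
  obtain ⟨M, hM⟩ := isCompact_Icc.exists_bound_of_continuousOn hVx
  have hgmeas : AEStronglyMeasurable g (volume.restrict (Icc 0 b)) :=
    AEStronglyMeasurable.inner (hVx.aestronglyMeasurable measurableSet_Icc)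
      hx'int.aestronglyMeasurable
  have hgint : IntegrableOn g (Icc 0 b) := by
    refine Integrable.mono' (hx'int.norm.const_mul M) hgmeas ?_
    refine (ae_restrict_iff' measurableSet_Icc).2 (ae_of_all _ fun u hu => ?_)
    calc ‖g u‖ ≤ ‖V' (x u)‖ * ‖x' u‖ := norm_inner_le_norm _ _
      _ ≤ M * ‖x' u‖ := mul_le_mul_of_nonneg_right (hM _ hu) (norm_nonneg _)
  -- interval integrability helpers
  have hsubx : ∀ {p q : ℝ}, 0 ≤ p → q ≤ b → p ≤ q →
      IntervalIntegrable x' volume p q := by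
    intro p q hp hq hpq
    apply IntegrableOn.intervalIntegrable
    rw [uIcc_of_le hpq]
    exact hx'int.mono_set (Icc_subset_Icc hp hq)
  have hsubg : ∀ {p q : ℝ}, 0 ≤ p → q ≤ b → p ≤ q →
      IntervalIntegrable g volume p q := by
    intro p q hp hq hpq
    apply IntegrableOn.intervalIntegrable
    rw [uIcc_of_le hpq]
    exact hgint.mono_set (Icc_subset_Icc hp hq)
  have hBnn : 0 ≤ ∫ u in a..b, ‖x' u‖ :=
    intervalIntegral.integral_nonneg hlt.le fun u _ => norm_nonneg _
  have hgle : (∫ u in a..b, g u) ≤ 0 := by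
    rw [intervalIntegral.integral_of_le hlt.le]
    apply integral_nonpos_of_ae
    have hss : Ioc a b ⊆ Ici (0 : ℝ) := fun u hu => ha.trans hu.1.le
    have hae := ae_restrict_of_ae_restrict_of_subset hss (key.mono fun t ht => ht.2)
    filter_upwards [hae] with u hu
    simp only [hgdef, Pi.zero_apply]
    rw [hu]
    exact neg_nonpos.2 (pow_nonneg (norm_nonneg _) 2)
  -- main quantitative estimate
  have main : ∀ η > (0:ℝ), V (x b) - V (x a) ≤ (∫ u in a..b, g u) +
      (3/2 * (k:ℝ) * η) * (∫ u in a..b, ‖x' u‖) := by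
    intro η hη
    obtain ⟨d, hd0, hdd⟩ := Metric.uniformContinuousOn_iff.1
      (isCompact_Icc.uniformContinuousOn_of_continuous hxcont) η hη
    obtain ⟨n, hn⟩ := exists_nat_gt ((b - a) / d)
    have hn0 : 0 < (n : ℝ) := lt_trans (div_pos (sub_pos.2 hlt) hd0) hn
    set h : ℝ := (b - a) / n with hhdef
    have hh0 : 0 < h := div_pos (sub_pos.2 hlt) hn0
    have hhd : h < d := by
      rw [hhdef, div_lt_iff₀ hn0]
      have := (div_lt_iff₀ hd0).1 hn
      nlinarith
    set τ : ℕ → ℝ := fun i => a + i * h with hτdef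
    have hτ0 : τ 0 = a := by simp [hτdef]
    have hτn : τ n = b := by
      simp only [hτdef, hhdef]
      field_simp
      ring
    have hτmono : ∀ i : ℕ, τ i ≤ τ (i+1) := by
      intro i
      simp only [hτdef]
      push_cast
      nlinarith [hh0.le]
    have hτstep : ∀ i : ℕ, τ (i+1) - τ i = h := by
      intro i
      simp only [hτdef]
      push_cast
      ring
    have hτmem : ∀ i ≤ n, τ i ∈ Icc a b := by
      intro i hi
      constructor
      · simp only [hτdef]
        nlinarith [hh0.le, (Nat.cast_nonneg i : (0:ℝ) ≤ i)]
      · rw [← hτn]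
        simp only [hτdef]
        have : (i : ℝ) ≤ n := Nat.cast_le.2 hi
        nlinarith [hh0.le]
    -- per-interval estimate
    have step : ∀ i < n, V (x (τ (i+1))) - V (x (τ i)) ≤
        (∫ u in τ i..τ (i+1), g u) +
          (3/2 * (k:ℝ) * η) * ∫ u in τ i..τ (i+1), ‖x' u‖ := by
      intro i hi
      set p := τ i with hpdef
      set q := τ (i+1) with hqdef
      have hpq : p ≤ q := hτmono i
      have hp0 : 0 ≤ p := ha.trans (hτmem i hi.le).1
      have hqb : q ≤ b := (hτmem (i+1) hi).2
      have hpb : p ∈ Icc (0:ℝ) b := ⟨hp0, hpq.trans hqb⟩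
      have hmem : ∀ u ∈ Icc p q, u ∈ Icc (0:ℝ) b := fun u hu =>
        ⟨hp0.trans hu.1, hu.2.trans hqb⟩
      have hxpu : ∀ u ∈ Icc p q, ‖x p - x u‖ ≤ η := by
        intro u hu
        have hdist : dist p u < d := by
          rw [Real.dist_eq, abs_of_nonpos (by linarith [hu.1])]
          have := hτstep i
          have hq_p : q - p = h := this
          linarith [hu.2]
        have := hdd p hpb u (hmem u hu) hdist
        rw [dist_eq_norm] at this
        exact this.le
      have hΔ : x q - x p = ∫ u in p..q, x' u := by
        rw [hsol.integ q (hp0.trans hpq), hsol.integ p hp0]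
        simp only [add_sub_add_left_eq_sub]
        exact intervalIntegral.integral_interval_sub_left
          (hsubx le_rfl hqb (hp0.trans hpq)) (hsubx le_rfl (hpq.trans hqb) hp0)
      have hx'pq : IntegrableOn x' (Ioc p q) :=
        hx'int.mono_set ((Ioc_subset_Icc_self).trans (Icc_subset_Icc hp0 hqb))
      have hB : ⟪V' (x p), x q - x p⟫ = ∫ u in p..q, ⟪V' (x p), x' u⟫ := by
        rw [hΔ, intervalIntegral.integral_of_le hpq, intervalIntegral.integral_of_le hpq]
        exact (integral_inner hx'pq _).symm
      have hIg : IntervalIntegrable g volume p q := hsubg hp0 hqb hpq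
      have hIkn : IntervalIntegrable (fun u => (k:ℝ) * η * ‖x' u‖) volume p q :=
        ((hsubx hp0 hqb hpq).norm).const_mul _
      have hC : ∫ u in p..q, ⟪V' (x p), x' u⟫ ≤
          ∫ u in p..q, (g u + (k:ℝ) * η * ‖x' u‖) := by
        refine intervalIntegral.integral_mono_on hpq ?_ (hIg.add hIkn) ?_
        · rw [intervalIntegrable_iff_integrableOn_Ioc_of_le hpq]
          exact hx'pq.const_inner _
        · intro u hu
          have h1 : ⟪V' (x p), x' u⟫ - g u = ⟪V' (x p) - V' (x u), x' u⟫ := by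
            simp only [hgdef]
            rw [inner_sub_left]
          have h2 : ⟪V' (x p) - V' (x u), x' u⟫ ≤ ‖V' (x p) - V' (x u)‖ * ‖x' u‖ :=
            real_inner_le_norm _ _
          have h3 : ‖V' (x p) - V' (x u)‖ ≤ (k:ℝ) * ‖x p - x u‖ := by
            have := hV'.dist_le_mul (x p) (x u)
            simpa [dist_eq_norm] using this
          have h4 := hxpu u hu
          have h5 : ‖V' (x p) - V' (x u)‖ * ‖x' u‖ ≤ ((k:ℝ) * ‖x p - x u‖) * ‖x' u‖ :=
            mul_le_mul_of_nonneg_right h3 (norm_nonneg _)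
          have h6 : ((k:ℝ) * ‖x p - x u‖) * ‖x' u‖ ≤ ((k:ℝ) * η) * ‖x' u‖ :=
            mul_le_mul_of_nonneg_right
              (mul_le_mul_of_nonneg_left h4 (NNReal.coe_nonneg k)) (norm_nonneg _)
          have h7 : (k:ℝ) * η * ‖x' u‖ = ((k:ℝ) * η) * ‖x' u‖ := by ring
          linarith
      have hD : ∫ u in p..q, (g u + (k:ℝ) * η * ‖x' u‖) =
          (∫ u in p..q, g u) + (k:ℝ) * η * ∫ u in p..q, ‖x' u‖ := by
        rw [intervalIntegral.integral_add hIg hIkn, intervalIntegral.integral_const_mul]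
      have hE : ‖x q - x p‖ ^ 2 ≤ η * ∫ u in p..q, ‖x' u‖ := by
        have e1 : ‖x q - x p‖ ≤ η := by
          have := hxpu q ⟨hpq, le_rfl⟩
          rwa [norm_sub_rev] at this
        have e2 : ‖x q - x p‖ ≤ ∫ u in p..q, ‖x' u‖ := by
          rw [hΔ]
          exact intervalIntegral.norm_integral_le_integral_norm hpq
        nlinarith [norm_nonneg (x q - x p)]
      have hdes := descent_lemma hV hV' (x p) (x q)
      have hk2 : (k:ℝ)/2 * ‖x q - x p‖^2 ≤ (k:ℝ)/2 * (η * ∫ u in p..q, ‖x' u‖) :=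
        mul_le_mul_of_nonneg_left hE (by positivity)
      calc V (x q) - V (x p)
          ≤ ⟪V' (x p), x q - x p⟫ + (k:ℝ)/2 * ‖x q - x p‖^2 := hdes
        _ ≤ (∫ u in p..q, g u) + (k:ℝ) * η * (∫ u in p..q, ‖x' u‖) +
            (k:ℝ)/2 * (η * ∫ u in p..q, ‖x' u‖) := by
            rw [hB]
            linarith [hC, hD.le, hD.ge]
        _ = (∫ u in p..q, g u) + (3/2 * (k:ℝ) * η) * ∫ u in p..q, ‖x' u‖ := by ring
    -- sum up
    have hintg : ∀ i < n, IntervalIntegrable g volume (τ i) (τ (i+1)) := fun i hi =>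
      hsubg (ha.trans (hτmem i hi.le).1) (hτmem (i+1) hi).2 (hτmono i)
    have hintn : ∀ i < n, IntervalIntegrable (fun u => ‖x' u‖) volume (τ i) (τ (i+1)) :=
      fun i hi =>
        (hsubx (ha.trans (hτmem i hi.le).1) (hτmem (i+1) hi).2 (hτmono i)).norm
    have hsum1 : ∑ i ∈ Finset.range n, (V (x (τ (i+1))) - V (x (τ i))) =
        V (x b) - V (x a) := by
      rw [Finset.sum_range_sub (fun i => V (x (τ i))), hτ0, hτn]
    have hsum2 : ∑ i ∈ Finset.range n, ∫ u in τ i..τ (i+1), g u = ∫ u in a..b, g u := by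
      have := intervalIntegral.sum_integral_adjacent_intervals hintg
      rwa [hτ0, hτn] at this
    have hsum3 : ∑ i ∈ Finset.range n, ∫ u in τ i..τ (i+1), ‖x' u‖ =
        ∫ u in a..b, ‖x' u‖ := by
      have := intervalIntegral.sum_integral_adjacent_intervals hintn
      rwa [hτ0, hτn] at this
    calc V (x b) - V (x a)
        = ∑ i ∈ Finset.range n, (V (x (τ (i+1))) - V (x (τ i))) := hsum1.symm
      _ ≤ ∑ i ∈ Finset.range n, ((∫ u in τ i..τ (i+1), g u) +
            (3/2 * (k:ℝ) * η) * ∫ u in τ i..τ (i+1), ‖x' u‖) :=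
          Finset.sum_le_sum fun i hi => step i (Finset.mem_range.1 hi)
      _ = (∑ i ∈ Finset.range n, ∫ u in τ i..τ (i+1), g u) +
            (3/2 * (k:ℝ) * η) * ∑ i ∈ Finset.range n, ∫ u in τ i..τ (i+1), ‖x' u‖ := by
          rw [Finset.sum_add_distrib, Finset.mul_sum]
      _ = (∫ u in a..b, g u) + (3/2 * (k:ℝ) * η) * ∫ u in a..b, ‖x' u‖ := by
          rw [hsum2, hsum3]
  -- conclude
  by_contra hcon
  push_neg at hcon
  set ε := V (x b) - V (x a) with hε
  have hε0 : 0 < ε := sub_pos.2 hcon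
  set c := 3/2 * (k:ℝ) * (∫ u in a..b, ‖x' u‖) with hcdef
  have hc0 : 0 ≤ c := by
    apply mul_nonneg _ hBnn
    positivity
  have hη0 : 0 < ε / (c + 1) := div_pos hε0 (by linarith)
  have hmain := main (ε / (c + 1)) hη0
  have hrw : 3/2 * (k:ℝ) * (ε / (c + 1)) * (∫ u in a..b, ‖x' u‖) = c * (ε / (c + 1)) := by
    rw [hcdef]; ring
  rw [hrw] at hmain
  have hlt2 : c * (ε / (c + 1)) < ε := by
    rw [mul_div_assoc']
    rw [div_lt_iff₀ (by linarith : (0:ℝ) < c + 1)]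
    nlinarith
  linarith
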